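/- If the recurrences x_{i+1} - λ_{i+1} = -λ_{i+1}²/((x_i - λ_i) - c_i) hold with λ_i ≠ 0, and the map x_0 ↦ x_2 is affine (fractional-linear with zero lower-left matrix entry), then c_1 = l_1 - λ_1 - λ_2 = 0, i.e., the offset in the second step vanishes. -/

import Mathlib

/-- If the two-step focusing map `x₀ ↦ x₂`, given by the recurrences
`x_{i+1} - λ_{i+1} = -λ_{i+1}²/((xᵢ - λᵢ) - cᵢ)` with `λ₁, λ₂ ≠ 0`, is affine
(agrees with `x₀ ↦ a x₀ + b` wherever defined), then the offset in the second
step vanishes: `c₁ = 0`. -/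
theorem two_step_affine_forces_zero_offset (lam0 lam1 lam2 c0 c1 : ℝ)
    (h1 : lam1 ≠ 0) (h2 : lam2 ≠ 0)
    (haff : ∃ a b : ℝ, ∀ x0 : ℝ, x0 - lam0 - c0 ≠ 0 →
      -(lam1 ^ 2) / (x0 - lam0 - c0) - c1 ≠ 0 →
      lam2 + -(lam2 ^ 2) / (-(lam1 ^ 2) / (x0 - lam0 - c0) - c1) = a * x0 + b) :
    c1 = 0 := by
  by_contra hc
  obtain ⟨a, b, h⟩ := haff
  have hl1 : lam1 ^ 2 ≠ 0 := pow_ne_zero 2 h1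
  have key : ∀ n : ℝ, n ≠ 0 → 1 + n ≠ 0 →
      lam2 + -(lam2 ^ 2) * n / (-(c1 * (1 + n))) =
        a * (n * lam1 ^ 2 / c1 + lam0 + c0) + b := by
    intro n hn hn1
    have ht : (n * lam1 ^ 2 / c1 + lam0 + c0) - lam0 - c0 = n * lam1 ^ 2 / c1 := by
      ring
    have htne : n * lam1 ^ 2 / c1 ≠ 0 := by
      exact div_ne_zero (mul_ne_zero hn hl1) hc
    have hden : -(lam1 ^ 2) / (n * lam1 ^ 2 / c1) - c1 = -(c1 * (1 + n)) / n := by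
      field_simp
      ring
    have hdne : -(c1 * (1 + n)) / n ≠ 0 :=
      div_ne_zero (neg_ne_zero.mpr (mul_ne_zero hc hn1)) hn
    have := h (n * lam1 ^ 2 / c1 + lam0 + c0) (by rw [ht]; exact htne)
      (by rw [ht, hden]; exact hdne)
    rw [ht, hden] at this
    rw [div_div_eq_mul_div] at this
    exact this
  have e1 := key 1 (by norm_num) (by norm_num)
  have e2 := key 2 (by norm_num) (by norm_num)
  have e3 := key 3 (by norm_num) (by norm_num)
  have hl2 : lam2 ^ 2 ≠ 0 := pow_ne_zero 2 h2
  field_simp at e1 e2 e3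
  have hz : c1 * lam2 ^ 2 = 0 := by linear_combination c1 * ((-6) * e1 + 8 * e2 + (-3) * e3)
  exact mul_ne_zero hc hl2 hz
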